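/- Let C be a commutative ring, let x_2, …, x_d, p be elements of C, and let I be the ideal (x_2, …, x_d) of C. Assume that C is separated and complete for the I-adic topology, and that for every integer n ≥ 1 the sequence (x_2^n, …, x_d^n, p) is a regular sequence on C. Then the ideal pC is closed for the I-adic topology; that is, ⋂_{n ≥ 1} (pC + (x_2^n, …, x_d^n)C) = pC. -/

import Mathlib

/-- A finite sequence `y` of elements of a commutative ring `B` is a regular sequence on `B`:
for each `i`, multiplication by `y i` is injective on `B/(y_1,…,y_{i-1})B`,
and `B ≠ (y_1,…,y_m)B`. -/
def IsRegSeq {B : Type*} [CommRing B] {m : ℕ} (y : Fin m → B) : Prop :=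
  (∀ i : Fin m, ∀ b : B,
      y i * b ∈ Ideal.span (y '' {j : Fin m | j < i}) →
        b ∈ Ideal.span (y '' {j : Fin m | j < i})) ∧
  Ideal.span (Set.range y) ≠ ⊤

section aux
variable {C : Type*} {m : ℕ}

lemma snoc_image_lt_last (f : Fin m → C) (q : C) :
    (Fin.snoc f q : Fin (m+1) → C) '' {j : Fin (m+1) | j < Fin.last m} = Set.range f := by
  ext a
  constructor
  · rintro ⟨j, hj, rfl⟩
    obtain ⟨i, rfl⟩ := Fin.exists_castSucc_eq.mpr (Fin.ne_last_of_lt hj)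
    exact ⟨i, by simp⟩
  · rintro ⟨i, rfl⟩
    exact ⟨i.castSucc, Fin.castSucc_lt_last i, by simp⟩

end aux

/-- **Step in Proposition 2.2**: if `C` is complete and separated for the `(x_2,…,x_d)`-adic
topology and `(x_2^n, …, x_d^n, q)` is a regular sequence for every `n ≥ 1`, then the ideal
`qC` is closed for the `(x_2,…,x_d)`-adic topology:
`⋂_{n ≥ 1} (qC + (x_2^n,…,x_d^n)C) = qC`. -/
theorem principal_ideal_adically_closed
    (C : Type) [CommRing C] (m : ℕ) (x : Fin m → C) (q : C)
    [IsAdicComplete (Ideal.span (Set.range x)) C]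
    (hreg : ∀ n : ℕ, 0 < n → IsRegSeq (Fin.snoc (fun i : Fin m => x i ^ n) q)) :
    (⨅ n : ℕ, Ideal.span {q} ⊔ Ideal.span (Set.range fun i : Fin m => x i ^ (n + 1))) =
      Ideal.span {q} := by
  set I := Ideal.span (Set.range x) with hI
  set J : ℕ → Ideal C := fun n => Ideal.span (Set.range fun i : Fin m => x i ^ (n + 1)) with hJ
  -- J n ≤ I ^ (n+1)
  have hJI : ∀ n, J n ≤ I ^ (n + 1) := by
    intro n
    rw [hJ, Ideal.span_le]
    rintro _ ⟨i, rfl⟩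
    show x i ^ (n + 1) ∈ I ^ (n + 1)
    exact Ideal.pow_mem_pow (Ideal.subset_span (Set.mem_range_self i)) _
  -- J is antitone
  have hJmono : ∀ k n : ℕ, k ≤ n → J n ≤ J k := by
    intro k n hkn
    rw [hJ, Ideal.span_le]
    rintro _ ⟨i, rfl⟩
    have : x i ^ (n + 1) = x i ^ (n - k) * x i ^ (k + 1) := by
      rw [← pow_add]; congr 1; omega
    show x i ^ (n + 1) ∈ J k
    rw [this]
    exact Ideal.mul_mem_left _ _ (Ideal.subset_span ⟨i, rfl⟩)
  -- regularity: q * b ∈ J n → b ∈ J n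
  have hq : ∀ n : ℕ, ∀ b : C, q * b ∈ J n → b ∈ J n := by
    intro n b hb
    have h := (hreg (n + 1) (by omega)).1 (Fin.last m) b
    rw [Fin.snoc_last, snoc_image_lt_last] at h
    exact h hb
  apply le_antisymm
  · intro a ha
    rw [Ideal.mem_iInf] at ha
    -- choose b n, c n with q * b n + c n = a
    have hchoice : ∀ n : ℕ, ∃ b : C, a - q * b ∈ J n := by
      intro n
      obtain ⟨y, hy, z, hz, hyz⟩ := Submodule.mem_sup.mp (ha n)
      obtain ⟨b, rfl⟩ := Ideal.mem_span_singleton'.mp hy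
      exact ⟨b, by rw [mul_comm]; simpa [← hyz] using hz⟩
    choose b hb using hchoice
    -- b is Cauchy
    have hcauchy : ∀ k n : ℕ, k ≤ n → b k ≡ b n [SMOD (I ^ k • ⊤ : Ideal C)] := by
      intro k n hkn
      rw [Ideal.smul_top_eq_map]
      refine SModEq.sub_mem.mpr ?_
      have h1 : q * (b k - b n) ∈ J k := by
        have := Ideal.sub_mem (J k) (hJmono k n hkn (hb n)) (hb k)
        have e : a - q * b n - (a - q * b k) = q * (b k - b n) := by ring
        rwa [e] at this
      have h2 := hq k _ h1
      have h3 : b k - b n ∈ I ^ k := (hJI k).trans (Ideal.pow_le_pow_right (by omega)) h2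
      simpa using h3
    obtain ⟨L, hL⟩ := IsPrecomplete.prec (IsAdicComplete.toIsPrecomplete (I := I)) (fun {k n} h => hcauchy k n h)
    have key : a - q * L = 0 := by
      refine IsHausdorff.haus (IsAdicComplete.toIsHausdorff (I := I)) _ ?_
      intro n
      rw [Ideal.smul_top_eq_map, SModEq.zero]
      have h1 : b n - L ∈ I ^ n := by
        have := SModEq.sub_mem.mp (hL n)
        rw [Ideal.smul_top_eq_map] at this
        simpa using this
      have h2 : q * (b n - L) ∈ I ^ n := Ideal.mul_mem_left _ _ h1
      have h3 : a - q * b n ∈ I ^ n :=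
        (hJI n).trans (Ideal.pow_le_pow_right (by omega)) (hb n)
      have : a - q * L = (a - q * b n) + q * (b n - L) := by ring
      rw [this]
      simpa using Ideal.add_mem _ h3 h2
    rw [Ideal.mem_span_singleton]
    exact ⟨L, by linear_combination key⟩
  · exact le_iInf fun n => le_sup_left
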